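/- Let x, y be real numbers and q a positive integer such that the fractional part of y is s/q for some s ∈ {0, 1, …, q−1}. Let s* be the largest element of {0,…,q−1} with round(x − s*/q) = round(x) (such s* exists since s = 0 qualifies). Then round(x − y) = round(x) − ⌊y⌋ if s ≤ s*, and round(x − y) = round(x) − ⌊y⌋ − 1 if s > s*. Hence the nearest-plane coefficient round(x − y) is computable from round(x), s*, ⌊y⌋ and s alone. -/

import Mathlib

lemma round_mono' {a b : ℝ} (h : a ≤ b) : round a ≤ round b := by
  rw [round_eq, round_eq]
  exact Int.floor_mono (by linarith)


/-- Computational core of Theorem 2 (correctness of the centralized protocol): if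
`fract y = s/q` with `s ∈ {0,…,q−1}` and `s*` is the largest element of `{0,…,q−1}`
with `round(x − s*/q) = round x`, then `round(x − y) = round x − ⌊y⌋` when `s ≤ s*`,
and `round(x − y) = round x − ⌊y⌋ − 1` when `s > s*`. -/
theorem centralized_protocol_correctness (x y : ℝ) (q s sStar : ℕ) (hq : 0 < q)
    (hs : s < q) (hfract : Int.fract y = (s : ℝ) / q)
    (hsStar : sStar < q)
    (hround : round (x - (sStar : ℝ) / q) = round x)
    (hlargest : ∀ t : ℕ, t < q → round (x - (t : ℝ) / q) = round x → t ≤ sStar) :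
    (s ≤ sStar → round (x - y) = round x - ⌊y⌋) ∧
    (sStar < s → round (x - y) = round x - ⌊y⌋ - 1) := by
  have hq0 : (0:ℝ) < q := by exact_mod_cast hq
  have key : x - y = (x - (s:ℝ)/q) - (⌊y⌋ : ℝ) := by
    have := Int.floor_add_fract y
    rw [hfract] at this
    linarith
  have h1 : round (x - y) = round (x - (s:ℝ)/q) - ⌊y⌋ := by
    rw [key, round_sub_intCast]
  have hb : ∀ t : ℕ, t < q →
      round x - 1 ≤ round (x - (t:ℝ)/q) ∧ round (x - (t:ℝ)/q) ≤ round x := by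
    intro t ht
    have h0 : (0:ℝ) ≤ (t:ℝ)/q := by positivity
    have h1' : (t:ℝ)/q < 1 := by
      rw [div_lt_one hq0]; exact_mod_cast ht
    constructor
    · have := round_mono' (show x - 1 ≤ x - (t:ℝ)/q by linarith)
      have hx1 : round (x - 1) = round x - 1 := by
        have := round_sub_intCast x 1
        simpa using this
      omega
    · exact round_mono' (by linarith)
  constructor
  · intro hle
    have hmono : round (x - (sStar:ℝ)/q) ≤ round (x - (s:ℝ)/q) := by
      apply round_mono'
      have hc : (s:ℝ)/q ≤ (sStar:ℝ)/q := by
        gcongr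
      linarith
    have := (hb s hs).2
    rw [hround] at hmono
    omega
  · intro hlt
    have hne : round (x - (s:ℝ)/q) ≠ round x := fun h => by
      have := hlargest s hs h; omega
    have := hb s hs
    omega
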